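/- The statements F(D) < Z(D), F(D) = Z(D) − 1, and 'S ⊆ V(D) is a zero forcing set if and only if |S| ≥ Z(D)' are all equivalent for a simple digraph D. -/
import Mathlib


/-- The set of out-neighbors of `v` in the digraph with arc relation `A`. -/
def Nout {V : Type} (A : V → V → Prop) (v : V) : Set V := {w | A v w}

/-- The set of in-neighbors of `v`. -/
def Nin {V : Type} (A : V → V → Prop) (v : V) : Set V := {w | A w v}

/-- One application of the color change rule to the set `S` of filled vertices. -/
def Bstep {V : Type} (A : V → V → Prop) (S : Set V) : Set V :=
  S ∪ {w | ∃ v ∈ S, Nout A v \ S = {w}}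

/-- `S` is a zero forcing set: iterating the color change rule fills all vertices. -/
def IsZFS {V : Type} (A : V → V → Prop) (S : Set V) : Prop :=
  ∃ t, (Bstep A)^[t] S = Set.univ

/-- The failed zero forcing number: the maximum cardinality of a failed zero forcing set. -/
noncomputable def Fnum {V : Type} (A : V → V → Prop) : ℕ :=
  sSup {k | ∃ S : Set V, ¬ IsZFS A S ∧ S.ncard = k}

/-- The zero forcing number: the minimum cardinality of a zero forcing set. -/
noncomputable def Znum {V : Type} (A : V → V → Prop) : ℕ :=
  sInf {k | ∃ S : Set V, IsZFS A S ∧ S.ncard = k}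

/-- `W` is a critical set: `W` is nonempty and no vertex outside `W` has exactly one
out-neighbor in `W`. -/
def IsCritical {V : Type} (A : V → V → Prop) (W : Set V) : Prop :=
  W.Nonempty ∧ ∀ v ∈ Wᶜ, (Nout A v ∩ W).ncard ≠ 1

/-- `D` is a directed cycle: either a single vertex with no arcs, or the vertices can be
cyclically labeled so that the arcs are exactly the consecutive ones. -/
def IsDirectedCycle {V : Type} [Fintype V] (A : V → V → Prop) : Prop :=
  (Fintype.card V = 1 ∧ ∀ u v : V, ¬ A u v) ∨
  (2 ≤ Fintype.card V ∧ ∃ e : ZMod (Fintype.card V) ≃ V,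
      ∀ i j : ZMod (Fintype.card V), A (e i) (e j) ↔ j = i + 1)


section Aux
set_option linter.unusedSectionVars false
variable {V : Type} [Fintype V] [Nonempty V] (A : V → V → Prop)

lemma bstep_empty : Bstep A ∅ = ∅ := by
  simp [Bstep]

lemma not_zfs_empty : ¬ IsZFS A (∅ : Set V) := by
  have key : ∀ t, (Bstep A)^[t] (∅ : Set V) = ∅ := by
    intro t
    induction t with
    | zero => simp
    | succ n ih => rw [Function.iterate_succ_apply', ih, bstep_empty]
  rintro ⟨t, ht⟩
  rw [key t] at ht
  exact (Set.empty_ne_univ ht)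

lemma zfs_univ : IsZFS A (Set.univ : Set V) := ⟨0, rfl⟩

lemma bddF : BddAbove {k | ∃ S : Set V, ¬ IsZFS A S ∧ S.ncard = k} := by
  refine ⟨Fintype.card V, ?_⟩
  rintro k ⟨S, -, rfl⟩
  have := Set.ncard_le_ncard (Set.subset_univ S) Set.finite_univ
  rwa [Set.ncard_univ, Nat.card_eq_fintype_card] at this

lemma znum_le (S : Set V) (h : IsZFS A S) : Znum A ≤ S.ncard :=
  Nat.sInf_le ⟨S, h, rfl⟩

lemma le_fnum (S : Set V) (h : ¬ IsZFS A S) : S.ncard ≤ Fnum A :=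
  le_csSup (bddF A) ⟨S, h, rfl⟩

lemma znum_pos : 1 ≤ Znum A := by
  rcases Nat.eq_zero_or_pos (Znum A) with h | h
  · exfalso
    have hne : {k | ∃ S : Set V, IsZFS A S ∧ S.ncard = k}.Nonempty :=
      ⟨(Set.univ : Set V).ncard, Set.univ, zfs_univ A, rfl⟩
    have h0 : 0 ∈ {k | ∃ S : Set V, IsZFS A S ∧ S.ncard = k} := by
      rw [Znum] at h
      rcases (Nat.sInf_eq_zero.mp h) with h | h
      · exact h
      · exact absurd h (Set.nonempty_iff_ne_empty.mp hne)
    obtain ⟨S, hS, hc⟩ := h0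
    have : S = ∅ := (Set.ncard_eq_zero (Set.toFinite S)).mp hc
    exact not_zfs_empty A (this ▸ hS)
  · exact h

lemma fnum_ge : Znum A - 1 ≤ Fnum A := by
  have hz := znum_pos A
  have hle : Znum A ≤ Fintype.card V := by
    have := znum_le A Set.univ (zfs_univ A)
    rwa [Set.ncard_univ, Nat.card_eq_fintype_card] at this
  have hle1 : Znum A - 1 ≤ (Set.univ : Set V).ncard := by
    simp only [Set.ncard_univ, Nat.card_eq_fintype_card]
    omega
  obtain ⟨T, -, hT⟩ := Set.exists_subset_card_eq hle1
  have hnz : ¬ IsZFS A T := by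
    intro h
    have := znum_le A T h
    omega
  have := le_fnum A T hnz
  omega

end Aux

theorem stmt_11 {V : Type} [Fintype V] [Nonempty V] (A : V → V → Prop)
    (hA : Irreflexive A) :
    (Fnum A < Znum A ↔ Fnum A = Znum A - 1) ∧
    (Fnum A < Znum A ↔ ∀ S : Set V, IsZFS A S ↔ Znum A ≤ S.ncard) := by
  have hz := znum_pos A
  have hge := fnum_ge A
  constructor
  · constructor
    · intro h; omega
    · intro h; omega
  · constructor
    · intro h S
      constructor
      · exact znum_le A S
      · intro hle
        by_contra hnz
        have := le_fnum A S hnz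
        omega
    · intro h
      have : Fnum A ≤ Znum A - 1 := by
        refine csSup_le ⟨0, ∅, not_zfs_empty A, Set.ncard_empty V⟩ ?_
        rintro k ⟨S, hS, rfl⟩
        have := (h S).mpr
        by_contra hc
        push_neg at hc
        exact hS (this (by omega))
      omega
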